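/- Let p, q, r, s, t, u be integers with p ≠ 0 and s ≠ 0, and define V(n) = p⌊n√2⌋ + qn + r and W(n) = s⌊n√2⌋ + tn + u for n ≥ 1. Suppose V and W are strictly increasing and V(1) = 1. Then V and W are complementary if and only if (p,q,r,s,t,u) = (1,0,0,1,2,0). -/

import Mathlib

set_option maxHeartbeats 1000000

lemma sqrt2_gt : (1.4:ℝ) < Real.sqrt 2 := by
  nlinarith [Real.sq_sqrt (show (0:ℝ) ≤ 2 by norm_num), Real.sqrt_nonneg 2]

lemma sqrt2_lt : Real.sqrt 2 < 1.45 := by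
  nlinarith [Real.sq_sqrt (show (0:ℝ) ≤ 2 by norm_num), Real.sqrt_nonneg 2]

lemma floor1 : ⌊((1:ℕ):ℝ) * Real.sqrt 2⌋ = 1 := by
  rw [Int.floor_eq_iff]
  push_cast
  constructor <;> nlinarith [sqrt2_gt, sqrt2_lt]

lemma floor2 : ⌊((2:ℕ):ℝ) * Real.sqrt 2⌋ = 2 := by
  rw [Int.floor_eq_iff]
  push_cast
  constructor <;> nlinarith [sqrt2_gt, sqrt2_lt]

lemma floor3 : ⌊((3:ℕ):ℝ) * Real.sqrt 2⌋ = 4 := by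
  rw [Int.floor_eq_iff]
  push_cast
  constructor <;> nlinarith [sqrt2_gt, sqrt2_lt]

lemma floor5 : ⌊((5:ℕ):ℝ) * Real.sqrt 2⌋ = 7 := by
  rw [Int.floor_eq_iff]
  push_cast
  constructor <;> nlinarith [sqrt2_gt, sqrt2_lt]

lemma coeff_zero {m n : ℤ} (h : (m:ℝ) + n * Real.sqrt 2 = 0) : m = 0 ∧ n = 0 := by
  rcases eq_or_ne n 0 with hn | hn
  · subst hn; simp at h; exact ⟨by exact_mod_cast h, rfl⟩
  · exfalso
    have : Real.sqrt 2 = (-m : ℝ) / n := by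
      field_simp
      linarith [h]
    exact irrational_sqrt_two (this ▸ by
      rw [show ((-m:ℝ)/n) = ((-m : ℚ):ℝ)/((n:ℚ):ℝ) by push_cast; ring]
      rw [← Rat.cast_div]
      exact ⟨_, rfl⟩)

lemma mono_ge (f : ℕ → ℤ) (hmono : ∀ m n : ℕ, 1 ≤ m → m < n → f m < f n)
    (h1 : 1 ≤ f 1) : ∀ n : ℕ, 1 ≤ n → (n:ℤ) ≤ f n := by
  intro n hn
  induction n with
  | zero => omega
  | succ k ih =>
    rcases Nat.eq_or_lt_of_le hn with h | h
    · simpa [← h] using h1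
    · have hk : 1 ≤ k := by omega
      have := hmono k (k+1) hk (by omega)
      have := ih hk
      push_cast
      omega


lemma count_partition (V W : ℕ → ℤ) (N : ℕ)
    (hVmono : ∀ m n : ℕ, 1 ≤ m → m < n → V m < V n)
    (hWmono : ∀ m n : ℕ, 1 ≤ m → m < n → W m < W n)
    (hdisj : Disjoint {z : ℤ | ∃ n : ℕ, 1 ≤ n ∧ V n = z} {z : ℤ | ∃ n : ℕ, 1 ≤ n ∧ W n = z})
    (hun : {z : ℤ | ∃ n : ℕ, 1 ≤ n ∧ V n = z} ∪ {z : ℤ | ∃ n : ℕ, 1 ≤ n ∧ W n = z}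
      = {z : ℤ | 0 < z})
    (hVge : ∀ n : ℕ, 1 ≤ n → (n:ℤ) ≤ V n) (hWge : ∀ n : ℕ, 1 ≤ n → (n:ℤ) ≤ W n) :
    ((Finset.Icc 1 N).filter fun n => V n ≤ (N:ℤ)).card
      + ((Finset.Icc 1 N).filter fun n => W n ≤ (N:ℤ)).card = N := by
  classical
  have hVpos : ∀ n : ℕ, 1 ≤ n → 0 < V n := by
    intro n hn
    have : V n ∈ {z : ℤ | 0 < z} := hun ▸ (Set.mem_union_left _ ⟨n, hn, rfl⟩)
    exact this
  have hWpos : ∀ n : ℕ, 1 ≤ n → 0 < W n := by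
    intro n hn
    have : W n ∈ {z : ℤ | 0 < z} := hun ▸ (Set.mem_union_right _ ⟨n, hn, rfl⟩)
    exact this
  set FV := (Finset.Icc 1 N).filter (fun n => V n ≤ (N:ℤ)) with hFV
  set FW := (Finset.Icc 1 N).filter (fun n => W n ≤ (N:ℤ)) with hFW
  have hVinj : Set.InjOn V ↑FV := by
    intro m hm n hn h
    simp only [hFV, Finset.coe_filter, Finset.mem_Icc, Set.mem_setOf_eq] at hm hn
    rcases lt_trichotomy m n with h' | h' | h'
    · exact absurd h (hVmono m n hm.1.1 h').ne
    · exact h'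
    · exact absurd h.symm (hVmono n m hn.1.1 h').ne
  have hWinj : Set.InjOn W ↑FW := by
    intro m hm n hn h
    simp only [hFW, Finset.coe_filter, Finset.mem_Icc, Set.mem_setOf_eq] at hm hn
    rcases lt_trichotomy m n with h' | h' | h'
    · exact absurd h (hWmono m n hm.1.1 h').ne
    · exact h'
    · exact absurd h.symm (hWmono n m hn.1.1 h').ne
  have hU : (FV.image V) ∪ (FW.image W) = Finset.Icc (1:ℤ) (N:ℤ) := by
    ext z
    simp only [Finset.mem_union, Finset.mem_image, hFV, hFW, Finset.mem_filter,
      Finset.mem_Icc]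
    constructor
    · rintro (⟨n, ⟨⟨hn1, hn2⟩, hle⟩, rfl⟩ | ⟨n, ⟨⟨hn1, hn2⟩, hle⟩, rfl⟩)
      · refine ⟨?_, hle⟩
        have := hVpos n hn1
        omega
      · refine ⟨?_, hle⟩
        have := hWpos n hn1
        omega
    · rintro ⟨h1, h2⟩
      have hz : z ∈ {z : ℤ | ∃ n : ℕ, 1 ≤ n ∧ V n = z} ∪ {z : ℤ | ∃ n : ℕ, 1 ≤ n ∧ W n = z} := by
        rw [hun]; exact lt_of_lt_of_le (by omega : (0:ℤ) < 1) h1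
      rcases hz with ⟨n, hn, rfl⟩ | ⟨n, hn, rfl⟩
      · left
        refine ⟨n, ⟨⟨hn, ?_⟩, h2⟩, rfl⟩
        have := (hVge n hn).trans h2
        exact_mod_cast this
      · right
        refine ⟨n, ⟨⟨hn, ?_⟩, h2⟩, rfl⟩
        have := (hWge n hn).trans h2
        exact_mod_cast this
  have hD : Disjoint (FV.image V) (FW.image W) := by
    rw [Finset.disjoint_left]
    rintro z hz hz'
    simp only [Finset.mem_image, hFV, hFW, Finset.mem_filter, Finset.mem_Icc] at hz hz'
    obtain ⟨n, ⟨⟨hn1, -⟩, -⟩, rfl⟩ := hz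
    obtain ⟨m, ⟨⟨hm1, -⟩, -⟩, hm⟩ := hz'
    exact Set.disjoint_left.mp hdisj ⟨n, hn1, rfl⟩ ⟨m, hm1, hm⟩
  have hcard := Finset.card_union_of_disjoint hD
  rw [hU, Finset.card_image_of_injOn hVinj, Finset.card_image_of_injOn hWinj] at hcard
  rw [Int.card_Icc] at hcard
  omega

lemma count_near (a C : ℝ) (ha : 1 < a) (hC : 0 ≤ C) (f : ℕ → ℤ)
    (hf : ∀ n : ℕ, 1 ≤ n → |(f n : ℝ) - a * n| ≤ C)
    (hge : ∀ n : ℕ, 1 ≤ n → (n:ℤ) ≤ f n) (N : ℕ) :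
    (N:ℝ) - C - a ≤ a * (((Finset.Icc 1 N).filter fun n => f n ≤ (N:ℤ)).card : ℝ) ∧
      a * (((Finset.Icc 1 N).filter fun n => f n ≤ (N:ℤ)).card : ℝ) ≤ (N:ℝ) + C := by
  classical
  have ha0 : (0:ℝ) < a := by linarith
  set F := (Finset.Icc 1 N).filter (fun n => f n ≤ (N:ℤ)) with hF
  constructor
  · rcases le_or_gt ((N:ℝ) - C - a) 0 with h0 | h0
    · have h1 : (0:ℝ) ≤ a * F.card := by positivity
      linarith
    · set m := ⌊((N:ℝ) - C)/a⌋₊ with hm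
      have hNC : (0:ℝ) ≤ ((N:ℝ) - C)/a := by
        apply div_nonneg _ ha0.le
        linarith
      have hsub : Finset.Icc 1 m ⊆ F := by
        intro n hn
        rw [Finset.mem_Icc] at hn
        have hn1 : 1 ≤ n := hn.1
        have hnm : (n:ℝ) ≤ ((N:ℝ) - C)/a := by
          have h2 : (n:ℝ) ≤ (m:ℝ) := by exact_mod_cast hn.2
          exact h2.trans (Nat.floor_le hNC)
        have han : a * n ≤ (N:ℝ) - C := by
          rw [le_div_iff₀ ha0] at hnm
          linarith [hnm]
        have hfn : (f n : ℝ) ≤ (N:ℝ) := by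
          have := hf n hn1
          rw [abs_le] at this
          linarith [this.2]
        have hfn' : f n ≤ (N:ℤ) := by exact_mod_cast hfn
        have hnN : n ≤ N := by
          have := (hge n hn1).trans hfn'
          exact_mod_cast this
        simp only [hF, Finset.mem_filter, Finset.mem_Icc]
        exact ⟨⟨hn1, hnN⟩, hfn'⟩
      have hcard : m ≤ F.card := by
        calc m = (Finset.Icc 1 m).card := by simp [Nat.card_Icc]
        _ ≤ F.card := Finset.card_le_card hsub
      have h1 : ((N:ℝ) - C)/a - 1 < (m:ℝ) := by
        have := Nat.lt_floor_add_one (((N:ℝ) - C)/a)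
        push_cast
        linarith
      have h2 : ((N:ℝ) - C)/a - 1 < (F.card:ℝ) := h1.trans_le (by exact_mod_cast hcard)
      have h3 : (N:ℝ) - C - a = a * (((N:ℝ)-C)/a - 1) := by
        field_simp
      nlinarith [h2, ha0]
  · set M := ⌊((N:ℝ) + C)/a⌋₊ with hM
    have hsub : F ⊆ Finset.Icc 1 M := by
      intro n hn
      simp only [hF, Finset.mem_filter, Finset.mem_Icc] at hn
      obtain ⟨⟨hn1, hnN⟩, hfn⟩ := hn
      have h1 : (f n : ℝ) ≤ (N:ℝ) := by exact_mod_cast hfn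
      have h2 : a * n - C ≤ (N:ℝ) := by
        have := hf n hn1
        rw [abs_le] at this
        linarith [this.1]
      have h3 : (n:ℝ) ≤ ((N:ℝ) + C)/a := by
        rw [le_div_iff₀ ha0]
        linarith
      exact Finset.mem_Icc.mpr ⟨hn1, Nat.le_floor h3⟩
    have hcard : F.card ≤ M := by
      have := Finset.card_le_card hsub
      simpa [Nat.card_Icc] using this
    have hM2 : (M:ℝ) ≤ ((N:ℝ)+C)/a := Nat.floor_le (by positivity)
    have h4 : (F.card : ℝ) ≤ (M:ℝ) := by exact_mod_cast hcard
    have h5 : (M:ℝ) * a ≤ (N:ℝ) + C := by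
      rw [le_div_iff₀ ha0] at hM2
      exact hM2
    nlinarith [h4, ha0]


lemma slope_gt_one (p q : ℤ) (hp : p ≠ 0) (hpq : 1 ≤ p + q) (h2pq : 1 ≤ 2*p + q) :
    1 < (q:ℝ) + (p:ℝ) * Real.sqrt 2 := by
  have hpqR : (1:ℝ) ≤ (p:ℝ) + (q:ℝ) := by exact_mod_cast hpq
  have h2pqR : (1:ℝ) ≤ 2*(p:ℝ) + (q:ℝ) := by push_cast; exact_mod_cast h2pq
  rcases hp.lt_or_gt with hpneg | hppos
  · have hp1 : (p:ℝ) ≤ -1 := by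
      have : p ≤ -1 := by omega
      exact_mod_cast this
    nlinarith [sqrt2_lt, h2pqR]
  · have hp1 : (1:ℝ) ≤ (p:ℝ) := by exact_mod_cast hppos
    nlinarith [sqrt2_gt, hpqR]

lemma case_solve (p q s t : ℤ) (hp : p ≠ 0) (hs : s ≠ 0)
    (hpq : 1 ≤ p + q) (h2pq : 1 ≤ 2*p + q) (hst : 1 ≤ s + t) (h2st : 1 ≤ 2*s + t)
    (E2 : q*t + 2*p*s - q - t = 0) (E1 : p*t + q*s - p - s = 0) :
    (p = 1 ∧ q = 0 ∧ s = 1 ∧ t = 2) ∨ (p = 1 ∧ q = 2 ∧ s = 1 ∧ t = 0) := by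
  set a : ℝ := (q:ℝ) + (p:ℝ) * Real.sqrt 2 with hadef
  set b : ℝ := (t:ℝ) + (s:ℝ) * Real.sqrt 2 with hbdef
  have hpqR : (1:ℝ) ≤ (p:ℝ) + (q:ℝ) := by exact_mod_cast hpq
  have h2pqR : (1:ℝ) ≤ 2*(p:ℝ) + (q:ℝ) := by push_cast; exact_mod_cast h2pq
  have hstR : (1:ℝ) ≤ (s:ℝ) + (t:ℝ) := by exact_mod_cast hst
  have h2stR : (1:ℝ) ≤ 2*(s:ℝ) + (t:ℝ) := by push_cast; exact_mod_cast h2st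
  have ha : 1 < a := slope_gt_one p q hp hpq h2pq
  have hb : 1 < b := slope_gt_one s t hs hst h2st
  have h2 : Real.sqrt 2 * Real.sqrt 2 = 2 := Real.mul_self_sqrt (by norm_num)
  have habeq : a * b = a + b := by
    have hE2 : ((q*t + 2*p*s - q - t : ℤ) : ℝ) = 0 := by exact_mod_cast E2
    have hE1 : ((p*t + q*s - p - s : ℤ) : ℝ) = 0 := by exact_mod_cast E1
    push_cast at hE2 hE1
    rw [hadef, hbdef]
    linear_combination hE2 + hE1 * Real.sqrt 2 + ((p:ℝ) * (s:ℝ)) * h2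
  rcases lt_or_ge a 2 with hA | hA
  · -- a < 2
    left
    have hpq1 : p = 1 ∧ q = 0 := by
      rcases hp.lt_or_gt with hpneg | hppos
      · exfalso
        have hp1 : (p:ℝ) ≤ -1 := by
          have : p ≤ -1 := by omega
          exact_mod_cast this
        have hpm1 : p = -1 := by
          by_contra hne2
          have : (p:ℝ) ≤ -2 := by
            have : p ≤ -2 := by omega
            exact_mod_cast this
          nlinarith [sqrt2_lt, h2pqR, hA]
        have hq3 : q = 3 := by
          have hq1 : 3 ≤ q := by omega
          have : (q:ℝ) < 2 + Real.sqrt 2 := by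
            rw [hadef] at hA
            have : (p:ℝ) = -1 := by exact_mod_cast hpm1
            nlinarith [hA, this]
          have : q ≤ 3 := by
            by_contra hq4
            have : (4:ℝ) ≤ (q:ℝ) := by
              have : (4:ℤ) ≤ q := by omega
              exact_mod_cast this
            nlinarith [sqrt2_lt]
          omega
        rw [hpm1, hq3] at E1 E2
        omega
      · have hp1 : 1 ≤ p := hppos
        have hp2 : p ≤ 2 := by
          by_contra hne2
          have : (3:ℝ) ≤ (p:ℝ) := by
            have : (3:ℤ) ≤ p := by omega
            exact_mod_cast this
          nlinarith [sqrt2_gt, hpqR, hA]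
        rcases (by omega : p = 1 ∨ p = 2) with hp' | hp'
        · -- p = 1 : q = 0
          have hq0 : q = 0 := by
            have hq1 : 0 ≤ q := by omega
            have : (q:ℝ) < 2 - Real.sqrt 2 := by
              rw [hadef] at hA
              have : (p:ℝ) = 1 := by exact_mod_cast hp'
              nlinarith [hA, this]
            have : q ≤ 0 := by
              by_contra hq2
              have : (1:ℝ) ≤ (q:ℝ) := by
                have : (1:ℤ) ≤ q := by omega
                exact_mod_cast this
              nlinarith [sqrt2_gt]
            omega
          exact ⟨hp', hq0⟩
        · -- p = 2 : q = -1 then contradiction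
          exfalso
          have hq0 : q = -1 := by
            have hq1 : -1 ≤ q := by omega
            have : (q:ℝ) < 2 - 2 * Real.sqrt 2 := by
              rw [hadef] at hA
              have : (p:ℝ) = 2 := by exact_mod_cast hp'
              nlinarith [hA, this]
            have : q ≤ -1 := by
              by_contra hq2
              have : (0:ℝ) ≤ (q:ℝ) := by
                have : (0:ℤ) ≤ q := by omega
                exact_mod_cast this
              nlinarith [sqrt2_gt]
            omega
          rw [hp', hq0] at E1 E2
          omega
    obtain ⟨hp', hq'⟩ := hpq1
    rw [hp', hq'] at E1 E2
    exact ⟨hp', hq', by omega, by omega⟩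
  · -- a ≥ 2, so b < 2
    right
    have hB : b < 2 := by
      have hble : b * (a - 1) = a := by nlinarith [habeq]
      have : b ≤ 2 := by nlinarith [hble, hA]
      rcases this.lt_or_eq with h | h
      · exact h
      · exfalso
        have : ((t - 2 : ℤ):ℝ) + ((s:ℤ):ℝ) * Real.sqrt 2 = 0 := by
          rw [hbdef] at h
          push_cast
          linarith [h]
        exact hs (coeff_zero this).2
    have hst1 : s = 1 ∧ t = 0 := by
      rcases hs.lt_or_gt with hsneg | hspos
      · exfalso
        have hs1 : (s:ℝ) ≤ -1 := by
          have : s ≤ -1 := by omega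
          exact_mod_cast this
        have hsm1 : s = -1 := by
          by_contra hne2
          have : (s:ℝ) ≤ -2 := by
            have : s ≤ -2 := by omega
            exact_mod_cast this
          nlinarith [sqrt2_lt, h2stR, hB]
        have ht3 : t = 3 := by
          have ht1 : 3 ≤ t := by omega
          have : (t:ℝ) < 2 + Real.sqrt 2 := by
            rw [hbdef] at hB
            have : (s:ℝ) = -1 := by exact_mod_cast hsm1
            nlinarith [hB, this]
          have : t ≤ 3 := by
            by_contra ht4
            have : (4:ℝ) ≤ (t:ℝ) := by
              have : (4:ℤ) ≤ t := by omega
              exact_mod_cast this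
            nlinarith [sqrt2_lt]
          omega
        rw [hsm1, ht3] at E1 E2
        omega
      · have hs1 : 1 ≤ s := hspos
        have hs2 : s ≤ 2 := by
          by_contra hne2
          have : (3:ℝ) ≤ (s:ℝ) := by
            have : (3:ℤ) ≤ s := by omega
            exact_mod_cast this
          nlinarith [sqrt2_gt, hstR, hB]
        rcases (by omega : s = 1 ∨ s = 2) with hs' | hs'
        · have ht0 : t = 0 := by
            have ht1 : 0 ≤ t := by omega
            have : (t:ℝ) < 2 - Real.sqrt 2 := by
              rw [hbdef] at hB
              have : (s:ℝ) = 1 := by exact_mod_cast hs'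
              nlinarith [hB, this]
            have : t ≤ 0 := by
              by_contra ht2
              have : (1:ℝ) ≤ (t:ℝ) := by
                have : (1:ℤ) ≤ t := by omega
                exact_mod_cast this
              nlinarith [sqrt2_gt]
            omega
          exact ⟨hs', ht0⟩
        · exfalso
          have ht0 : t = -1 := by
            have ht1 : -1 ≤ t := by omega
            have : (t:ℝ) < 2 - 2 * Real.sqrt 2 := by
              rw [hbdef] at hB
              have : (s:ℝ) = 2 := by exact_mod_cast hs'
              nlinarith [hB, this]
            have : t ≤ -1 := by
              by_contra ht2
              have : (0:ℝ) ≤ (t:ℝ) := by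
                have : (0:ℤ) ≤ t := by omega
                exact_mod_cast this
              nlinarith [sqrt2_gt]
            omega
          rw [hs', ht0] at E1 E2
          omega
    obtain ⟨hs', ht'⟩ := hst1
    rw [hs', ht'] at E1 E2
    exact ⟨by omega, by omega, hs', ht'⟩

lemma forward_dir (p q r s t u : ℤ) (hp : p ≠ 0) (hs : s ≠ 0)
    (V W : ℕ → ℤ)
    (hV : ∀ n : ℕ, 1 ≤ n → V n = p * ⌊(n : ℝ) * Real.sqrt 2⌋ + q * n + r)
    (hW : ∀ n : ℕ, 1 ≤ n → W n = s * ⌊(n : ℝ) * Real.sqrt 2⌋ + t * n + u)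
    (hVmono : ∀ m n : ℕ, 1 ≤ m → m < n → V m < V n)
    (hWmono : ∀ m n : ℕ, 1 ≤ m → m < n → W m < W n)
    (hV1 : V 1 = 1)
    (hdisj : Disjoint {z : ℤ | ∃ n : ℕ, 1 ≤ n ∧ V n = z} {z : ℤ | ∃ n : ℕ, 1 ≤ n ∧ W n = z})
    (hun : {z : ℤ | ∃ n : ℕ, 1 ≤ n ∧ V n = z} ∪ {z : ℤ | ∃ n : ℕ, 1 ≤ n ∧ W n = z}
      = {z : ℤ | 0 < z}) :
    (p, q, r, s, t, u) = (1, 0, 0, 1, 2, 0) := by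
  classical
  -- positivity of values
  have hVpos : ∀ n : ℕ, 1 ≤ n → 0 < V n := by
    intro n hn
    have : V n ∈ {z : ℤ | 0 < z} := hun ▸ (Set.mem_union_left _ ⟨n, hn, rfl⟩)
    exact this
  have hWpos : ∀ n : ℕ, 1 ≤ n → 0 < W n := by
    intro n hn
    have : W n ∈ {z : ℤ | 0 < z} := hun ▸ (Set.mem_union_right _ ⟨n, hn, rfl⟩)
    exact this
  have hVge := mono_ge V hVmono (by omega)
  have hWge := mono_ge W hWmono (hWpos 1 le_rfl)
  -- step sizes
  have hpq : 1 ≤ p + q := by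
    have h12 := hVmono 1 2 le_rfl (by omega)
    rw [hV 1 le_rfl, hV 2 (by omega), floor1, floor2] at h12
    push_cast at h12
    omega
  have h2pq : 1 ≤ 2*p + q := by
    have h23 := hVmono 2 3 (by omega) (by omega)
    rw [hV 2 (by omega), hV 3 (by omega), floor2, floor3] at h23
    push_cast at h23
    omega
  have hst : 1 ≤ s + t := by
    have h12 := hWmono 1 2 le_rfl (by omega)
    rw [hW 1 le_rfl, hW 2 (by omega), floor1, floor2] at h12
    push_cast at h12
    omega
  have h2st : 1 ≤ 2*s + t := by
    have h23 := hWmono 2 3 (by omega) (by omega)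
    rw [hW 2 (by omega), hW 3 (by omega), floor2, floor3] at h23
    push_cast at h23
    omega
  -- real slopes
  set a : ℝ := (q:ℝ) + (p:ℝ) * Real.sqrt 2 with hadef
  set b : ℝ := (t:ℝ) + (s:ℝ) * Real.sqrt 2 with hbdef
  have hpqR : (1:ℝ) ≤ (p:ℝ) + (q:ℝ) := by exact_mod_cast hpq
  have h2pqR : (1:ℝ) ≤ 2*(p:ℝ) + (q:ℝ) := by push_cast; exact_mod_cast h2pq
  have hstR : (1:ℝ) ≤ (s:ℝ) + (t:ℝ) := by exact_mod_cast hst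
  have h2stR : (1:ℝ) ≤ 2*(s:ℝ) + (t:ℝ) := by push_cast; exact_mod_cast h2st
  have ha : 1 < a := by
    rcases hp.lt_or_gt with hpneg | hppos
    · have hp1 : (p:ℝ) ≤ -1 := by
        have : p ≤ -1 := by omega
        exact_mod_cast this
      nlinarith [sqrt2_lt, h2pqR]
    · have hp1 : (1:ℝ) ≤ (p:ℝ) := by exact_mod_cast hppos
      nlinarith [sqrt2_gt, hpqR]
  have hb : 1 < b := by
    rcases hs.lt_or_gt with hsneg | hspos
    · have hs1 : (s:ℝ) ≤ -1 := by
        have : s ≤ -1 := by omega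
        exact_mod_cast this
      nlinarith [sqrt2_lt, h2stR]
    · have hs1 : (1:ℝ) ≤ (s:ℝ) := by exact_mod_cast hspos
      nlinarith [sqrt2_gt, hstR]
  have ha0 : (0:ℝ) < a := by linarith
  have hb0 : (0:ℝ) < b := by linarith
  -- linear approximation
  set CV : ℝ := |(p:ℝ)| + |(r:ℝ)| with hCVdef
  set CW : ℝ := |(s:ℝ)| + |(u:ℝ)| with hCWdef
  have hCV : 0 ≤ CV := by positivity
  have hCW : 0 ≤ CW := by positivity
  have haV : ∀ n : ℕ, 1 ≤ n → |(V n : ℝ) - a * n| ≤ CV := by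
    intro n hn
    rw [hV n hn]
    have hfl : |((⌊(n:ℝ) * Real.sqrt 2⌋ : ℝ) - (n:ℝ) * Real.sqrt 2)| ≤ 1 := by
      rw [abs_le]
      constructor
      · linarith [Int.lt_floor_add_one ((n:ℝ) * Real.sqrt 2)]
      · linarith [Int.floor_le ((n:ℝ) * Real.sqrt 2)]
    have hrw : ((p * ⌊(n:ℝ) * Real.sqrt 2⌋ + q * n + r : ℤ) : ℝ) - a * n
        = (p:ℝ) * ((⌊(n:ℝ) * Real.sqrt 2⌋ : ℝ) - (n:ℝ) * Real.sqrt 2) + (r:ℝ) := by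
      push_cast
      ring
    rw [hrw]
    calc |(p:ℝ) * ((⌊(n:ℝ) * Real.sqrt 2⌋ : ℝ) - (n:ℝ) * Real.sqrt 2) + (r:ℝ)|
        ≤ |(p:ℝ) * ((⌊(n:ℝ) * Real.sqrt 2⌋ : ℝ) - (n:ℝ) * Real.sqrt 2)| + |(r:ℝ)| :=
          abs_add_le _ _
      _ = |(p:ℝ)| * |((⌊(n:ℝ) * Real.sqrt 2⌋ : ℝ) - (n:ℝ) * Real.sqrt 2)| + |(r:ℝ)| := by
          rw [abs_mul]
      _ ≤ |(p:ℝ)| * 1 + |(r:ℝ)| := by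
          have := mul_le_mul_of_nonneg_left hfl (abs_nonneg (p:ℝ))
          linarith
      _ = CV := by rw [hCVdef]; ring
  have haW : ∀ n : ℕ, 1 ≤ n → |(W n : ℝ) - b * n| ≤ CW := by
    intro n hn
    rw [hW n hn]
    have hfl : |((⌊(n:ℝ) * Real.sqrt 2⌋ : ℝ) - (n:ℝ) * Real.sqrt 2)| ≤ 1 := by
      rw [abs_le]
      constructor
      · linarith [Int.lt_floor_add_one ((n:ℝ) * Real.sqrt 2)]
      · linarith [Int.floor_le ((n:ℝ) * Real.sqrt 2)]
    have hrw : ((s * ⌊(n:ℝ) * Real.sqrt 2⌋ + t * n + u : ℤ) : ℝ) - b * n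
        = (s:ℝ) * ((⌊(n:ℝ) * Real.sqrt 2⌋ : ℝ) - (n:ℝ) * Real.sqrt 2) + (u:ℝ) := by
      push_cast
      ring
    rw [hrw]
    calc |(s:ℝ) * ((⌊(n:ℝ) * Real.sqrt 2⌋ : ℝ) - (n:ℝ) * Real.sqrt 2) + (u:ℝ)|
        ≤ |(s:ℝ) * ((⌊(n:ℝ) * Real.sqrt 2⌋ : ℝ) - (n:ℝ) * Real.sqrt 2)| + |(u:ℝ)| :=
          abs_add_le _ _
      _ = |(s:ℝ)| * |((⌊(n:ℝ) * Real.sqrt 2⌋ : ℝ) - (n:ℝ) * Real.sqrt 2)| + |(u:ℝ)| := by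
          rw [abs_mul]
      _ ≤ |(s:ℝ)| * 1 + |(u:ℝ)| := by
          have := mul_le_mul_of_nonneg_left hfl (abs_nonneg (s:ℝ))
          linarith
      _ = CW := by rw [hCWdef]; ring
  -- the key equation a*b = a + b
  have habeq : a * b = a + b := by
    by_contra hne
    have hεne : a * b - (a + b) ≠ 0 := sub_ne_zero.2 hne
    have hεpos : 0 < |a * b - (a + b)| := abs_pos.2 hεne
    set K : ℝ := b * (CV + a) + a * (CW + b) with hKdef
    have key : ∀ N : ℕ, |a * b - (a + b)| * N ≤ K := by
      intro N
      have hc := count_partition V W N hVmono hWmono hdisj hun hVge hWge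
      set x : ℝ := (((Finset.Icc 1 N).filter fun n => V n ≤ (N:ℤ)).card : ℝ) with hxdef
      set y : ℝ := (((Finset.Icc 1 N).filter fun n => W n ≤ (N:ℤ)).card : ℝ) with hydef
      have hxy : x + y = (N:ℝ) := by
        rw [hxdef, hydef]
        exact_mod_cast hc
      obtain ⟨hL1, hU1⟩ := count_near a CV ha hCV V haV hVge N
      obtain ⟨hL2, hU2⟩ := count_near b CW hb hCW W haW hWge N
      rw [← hxdef] at hL1 hU1
      rw [← hydef] at hL2 hU2
      have hid : (a * b - (a + b)) * (N:ℝ) = b * (a * x - N) + a * (b * y - N) := by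
        rw [← hxy]; ring
      have e1 : b * (a * x - N) ≤ b * CV :=
        mul_le_mul_of_nonneg_left (by linarith) hb0.le
      have e2 : b * (-(CV + a)) ≤ b * (a * x - N) :=
        mul_le_mul_of_nonneg_left (by linarith) hb0.le
      have e3 : a * (b * y - N) ≤ a * CW :=
        mul_le_mul_of_nonneg_left (by linarith) ha0.le
      have e4 : a * (-(CW + b)) ≤ a * (b * y - N) :=
        mul_le_mul_of_nonneg_left (by linarith) ha0.le
      have habs : |(a * b - (a + b)) * (N:ℝ)| ≤ K := by
        rw [abs_le]
        constructor
        · rw [hid, hKdef]; nlinarith [e2, e4]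
        · rw [hid, hKdef]; nlinarith [e1, e3, mul_nonneg hb0.le hCV, mul_nonneg ha0.le hCW,
            mul_nonneg hb0.le ha0.le, mul_nonneg ha0.le hb0.le]
      rwa [abs_mul, Nat.abs_cast] at habs
    obtain ⟨N, hN⟩ := exists_nat_gt (K / |a * b - (a + b)|)
    have h1 := key N
    rw [div_lt_iff₀ hεpos] at hN
    linarith [h1, hN, mul_comm ((N:ℝ)) |a * b - (a + b)|]
  -- extract integer equations
  have hexp : ((q*t + 2*p*s - q - t : ℤ) : ℝ) + ((p*t + q*s - p - s : ℤ) : ℝ) * Real.sqrt 2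
      = a * b - (a + b) := by
    have h2 : Real.sqrt 2 * Real.sqrt 2 = 2 := Real.mul_self_sqrt (by norm_num)
    rw [hadef, hbdef]
    push_cast
    linear_combination (-(p:ℝ) * (s:ℝ)) * h2
  have hE := coeff_zero (m := q*t + 2*p*s - q - t) (n := p*t + q*s - p - s)
    (by rw [hexp]; rw [habeq]; ring)
  have E2 : q*t + 2*p*s - q - t = 0 := hE.1
  have E1 : p*t + q*s - p - s = 0 := hE.2
  have hcases := case_solve p q s t hp hs hpq h2pq hst h2st E2 E1
  rcases hcases with ⟨hp', hq', hs', ht'⟩ | ⟨hp', hq', hs', ht'⟩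
  · -- (p,q,s,t) = (1,0,1,2)
    subst hp'
    subst hq'
    subst hs'
    subst ht'
    have hr : r = 0 := by
      have e := hV 1 le_rfl
      rw [floor1] at e
      rw [hV1] at e
      push_cast at e
      omega
    subst hr
    have hV2 : V 2 = 2 := by
      have e := hV 2 (by omega)
      rw [floor2] at e
      push_cast at e
      omega
    have hV3 : V 3 = 4 := by
      have e := hV 3 (by omega)
      rw [floor3] at e
      push_cast at e
      omega
    have h3V : ∀ n : ℕ, 1 ≤ n → V n ≠ 3 := by
      intro n hn hne
      rcases lt_or_ge n 3 with h | h
      · interval_cases n <;> omega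
      · rcases Nat.eq_or_lt_of_le h with h' | h'
        · subst h'; omega
        · have := hVmono 3 n (by omega) h'
          omega
    have h3 : (3:ℤ) ∈ {z : ℤ | ∃ n : ℕ, 1 ≤ n ∧ V n = z}
        ∪ {z : ℤ | ∃ n : ℕ, 1 ≤ n ∧ W n = z} := by
      rw [hun]
      exact (by norm_num : (0:ℤ) < 3)
    obtain ⟨m, hm, hWm⟩ : ∃ m : ℕ, 1 ≤ m ∧ W m = 3 := by
      rcases h3 with ⟨n, hn, he⟩ | h
      · exact absurd he (h3V n hn)
      · exact h
    have hW1 : W 1 = 3 + u := by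
      have e := hW 1 le_rfl
      rw [floor1] at e
      push_cast at e
      omega
    have hW1le : W 1 ≤ 3 := by
      rcases Nat.eq_or_lt_of_le hm with h' | h'
      · subst h'; omega
      · have := hWmono 1 m le_rfl h'
        omega
    have hWne1 : W 1 ≠ 1 := by
      intro he
      exact Set.disjoint_left.mp hdisj ⟨1, le_rfl, hV1⟩ ⟨1, le_rfl, he⟩
    have hWne2 : W 1 ≠ 2 := by
      intro he
      exact Set.disjoint_left.mp hdisj ⟨2, by omega, hV2⟩ ⟨1, le_rfl, he⟩
    have hW1pos := hWpos 1 le_rfl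
    have hu : u = 0 := by omega
    subst hu
    rfl
  · -- (p,q,s,t) = (1,2,1,0) : impossible
    exfalso
    subst hp'
    subst hq'
    subst hs'
    subst ht'
    have hr : r = -2 := by
      have e := hV 1 le_rfl
      rw [floor1] at e
      rw [hV1] at e
      push_cast at e
      omega
    subst hr
    have hV2 : V 2 = 4 := by
      have e := hV 2 (by omega)
      rw [floor2] at e
      push_cast at e
      omega
    have h2V : ∀ n : ℕ, 1 ≤ n → V n ≠ 2 := by
      intro n hn hne
      rcases lt_or_ge n 2 with h | h
      · interval_cases n
        omega
      · rcases Nat.eq_or_lt_of_le h with h' | h'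
        · subst h'; omega
        · have := hVmono 2 n (by omega) h'
          omega
    have h2 : (2:ℤ) ∈ {z : ℤ | ∃ n : ℕ, 1 ≤ n ∧ V n = z}
        ∪ {z : ℤ | ∃ n : ℕ, 1 ≤ n ∧ W n = z} := by
      rw [hun]
      exact (by norm_num : (0:ℤ) < 2)
    obtain ⟨m, hm, hWm⟩ : ∃ m : ℕ, 1 ≤ m ∧ W m = 2 := by
      rcases h2 with ⟨n, hn, he⟩ | h
      · exact absurd he (h2V n hn)
      · exact h
    have hW1 : W 1 = 1 + u := by
      have e := hW 1 le_rfl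
      rw [floor1] at e
      push_cast at e
      omega
    have hW1le : W 1 ≤ 2 := by
      rcases Nat.eq_or_lt_of_le hm with h' | h'
      · subst h'; omega
      · have := hWmono 1 m le_rfl h'
        omega
    have hWne1 : W 1 ≠ 1 := by
      intro he
      exact Set.disjoint_left.mp hdisj ⟨1, le_rfl, hV1⟩ ⟨1, le_rfl, he⟩
    have hW1pos := hWpos 1 le_rfl
    have hu : u = 1 := by omega
    subst hu
    have hW5 : W 5 = 8 := by
      have e := hW 5 (by omega)
      rw [floor5] at e
      push_cast at e
      omega
    have hV3 : V 3 = 8 := by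
      have e := hV 3 (by omega)
      rw [floor3] at e
      push_cast at e
      omega
    exact Set.disjoint_left.mp hdisj ⟨3, by omega, hV3⟩ ⟨5, by omega, hW5⟩

lemma conj2 : Real.HolderConjugate (Real.sqrt 2) (2 + Real.sqrt 2) := by
  rw [Real.holderConjugate_iff]
  constructor
  · nlinarith [sqrt2_gt]
  · have h2 : Real.sqrt 2 ^ 2 = 2 := Real.sq_sqrt (by norm_num)
    have h0 : (0:ℝ) < Real.sqrt 2 := by nlinarith [sqrt2_gt]
    field_simp
    nlinarith [h2, h0]

open scoped symmDiff in
lemma back_dir (V W : ℕ → ℤ)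
    (hV : ∀ n : ℕ, 1 ≤ n → V n = ⌊(n : ℝ) * Real.sqrt 2⌋)
    (hW : ∀ n : ℕ, 1 ≤ n → W n = ⌊(n : ℝ) * Real.sqrt 2⌋ + 2 * n) :
    Disjoint {z : ℤ | ∃ n : ℕ, 1 ≤ n ∧ V n = z} {z : ℤ | ∃ n : ℕ, 1 ≤ n ∧ W n = z} ∧
    {z : ℤ | ∃ n : ℕ, 1 ≤ n ∧ V n = z} ∪ {z : ℤ | ∃ n : ℕ, 1 ≤ n ∧ W n = z} = {z : ℤ | 0 < z} := by
  have hsd := Irrational.beattySeq_symmDiff_beattySeq_pos conj2 irrational_sqrt_two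
  have hWB : ∀ n : ℕ, 1 ≤ n → W n = beattySeq (2 + Real.sqrt 2) n := by
    intro n hn
    rw [hW n hn, beattySeq]
    have : ((n:ℤ):ℝ) * (2 + Real.sqrt 2) = (n:ℝ) * Real.sqrt 2 + ((2*(n:ℤ) : ℤ):ℝ) := by
      push_cast; ring
    rw [this, Int.floor_add_intCast]
  have hVB : ∀ n : ℕ, 1 ≤ n → V n = beattySeq (Real.sqrt 2) n := by
    intro n hn; rw [hV n hn]; rfl
  -- identify the sets
  have hSV : {z : ℤ | ∃ n : ℕ, 1 ≤ n ∧ V n = z} = {x | ∃ k > 0, beattySeq (Real.sqrt 2) k = x} := by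
    ext z
    constructor
    · rintro ⟨n, hn, rfl⟩
      exact ⟨n, by exact_mod_cast hn, (hVB n hn).symm⟩
    · rintro ⟨k, hk, rfl⟩
      refine ⟨k.toNat, by omega, ?_⟩
      rw [hVB k.toNat (by omega)]
      congr 1
      omega
  have hSW : {z : ℤ | ∃ n : ℕ, 1 ≤ n ∧ W n = z}
      = {x | ∃ k > 0, beattySeq (2 + Real.sqrt 2) k = x} := by
    ext z
    constructor
    · rintro ⟨n, hn, rfl⟩
      exact ⟨n, by exact_mod_cast hn, (hWB n hn).symm⟩
    · rintro ⟨k, hk, rfl⟩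
      refine ⟨k.toNat, by omega, ?_⟩
      rw [hWB k.toNat (by omega)]
      congr 2 <;> omega
  rw [hSV, hSW]
  -- positivity of beatty values
  have hposV : ∀ x ∈ {x | ∃ k > 0, beattySeq (Real.sqrt 2) k = x}, 0 < x := by
    rintro x ⟨k, hk, rfl⟩
    rw [beattySeq, Int.floor_pos]
    have hk1 : (1:ℝ) ≤ (k:ℝ) := by exact_mod_cast hk
    nlinarith [sqrt2_gt]
  have hposW : ∀ x ∈ {x | ∃ k > 0, beattySeq (2 + Real.sqrt 2) k = x}, 0 < x := by
    rintro x ⟨k, hk, rfl⟩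
    rw [beattySeq, Int.floor_pos]
    have hk1 : (1:ℝ) ≤ (k:ℝ) := by exact_mod_cast hk
    nlinarith [sqrt2_gt]
  constructor
  · rw [Set.disjoint_left]
    intro x hxA hxB
    have hx : x ∈ {n : ℤ | 0 < n} := hposV x hxA
    rw [← hsd] at hx
    rw [Set.mem_symmDiff] at hx
    tauto
  · apply Set.eq_of_subset_of_subset
    · rintro x (hx | hx)
      exacts [hposV x hx, hposW x hx]
    · intro x hx
      rw [← hsd] at hx
      rw [Set.mem_symmDiff] at hx
      rcases hx with ⟨h, -⟩ | ⟨h, -⟩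
      exacts [Or.inl h, Or.inr h]


/-- Two sequences (indexed by `n ≥ 1`) are complementary if their value sets are
disjoint and their union is the set of positive integers. -/
def ComplementaryPair (V W : ℕ → ℤ) : Prop :=
  Disjoint {z : ℤ | ∃ n : ℕ, 1 ≤ n ∧ V n = z} {z : ℤ | ∃ n : ℕ, 1 ≤ n ∧ W n = z} ∧
  {z : ℤ | ∃ n : ℕ, 1 ≤ n ∧ V n = z} ∪ {z : ℤ | ∃ n : ℕ, 1 ≤ n ∧ W n = z} = {z : ℤ | 0 < z}

/-- For `α = √2`, the only nontrivial increasing solution of the complementary pair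
problem is `(p,q,r,s,t,u) = (1,0,0,1,2,0)`. -/
theorem complementary_pairs_sqrt_two (p q r s t u : ℤ) (hp : p ≠ 0) (hs : s ≠ 0)
    (V W : ℕ → ℤ)
    (hV : ∀ n : ℕ, 1 ≤ n → V n = p * ⌊(n : ℝ) * Real.sqrt 2⌋ + q * n + r)
    (hW : ∀ n : ℕ, 1 ≤ n → W n = s * ⌊(n : ℝ) * Real.sqrt 2⌋ + t * n + u)
    (hVmono : ∀ m n : ℕ, 1 ≤ m → m < n → V m < V n)
    (hWmono : ∀ m n : ℕ, 1 ≤ m → m < n → W m < W n)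
    (hV1 : V 1 = 1) :
    ComplementaryPair V W ↔ (p, q, r, s, t, u) = (1, 0, 0, 1, 2, 0) := by
  constructor
  · intro h
    unfold ComplementaryPair at h
    exact forward_dir p q r s t u hp hs V W hV hW hVmono hWmono hV1 h.1 h.2
  · intro h
    obtain ⟨hp', hq', hr', hs', ht', hu'⟩ :
        p = 1 ∧ q = 0 ∧ r = 0 ∧ s = 1 ∧ t = 2 ∧ u = 0 := by
      simpa [Prod.ext_iff] using h
    subst hp'
    subst hq'
    subst hr'
    subst hs'
    subst ht'
    subst hu'
    unfold ComplementaryPair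
    exact back_dir V W
      (fun n hn => by rw [hV n hn]; ring)
      (fun n hn => by rw [hW n hn]; ring)
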